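/- Every subtree hypergraph with strict vertex preferences over incident hyperedges admits a stable matching. Concretely: if f is a hyperedge whose top vertex r_f is farthest from the root, X_f is the set of hyperedges containing r_f that r_f ranks strictly below f, and M is a stable matching of the hypergraph obtained by deleting X_f ∪ {f}, then M is a stable matching of the original hypergraph whenever M covers r_f, and M ∪ {f} is a stable matching of the original hypergraph whenever M does not cover r_f. -/

import Mathlib

open scoped Classical

/-- `M` is a matching of the hypergraph with edge set `E`. -/
def IsMatching {V : Type*} [DecidableEq V] (E : Finset (Finset V))
    (M : Finset (Finset V)) : Prop :=
  M ⊆ E ∧ ∀ v : V, (M.filter (fun e => v ∈ e)).card ≤ 1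

/-- Vertex `v` is covered by the matching `M`. -/
def Covers {V : Type*} (M : Finset (Finset V)) (v : V) : Prop :=
  ∃ e ∈ M, v ∈ e

/-- `M` is a stable matching of the hypergraph with edge set `E`: it is a matching and no
hyperedge `e ∈ E \ M` blocks it, where `e` blocks `M` if every vertex of `e` is either
uncovered by `M` or strictly prefers `e` to its hyperedge in `M`. -/
def IsStableMatching {V : Type*} [DecidableEq V] (E : Finset (Finset V))
    (pref : V → Finset V → Finset V → Prop)
    (M : Finset (Finset V)) : Prop :=
  IsMatching E M ∧
    ∀ e ∈ E, e ∉ M → ¬ (∀ v ∈ e, ∀ e' ∈ M, v ∈ e' → pref v e e')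

namespace SubtreeSM

open SimpleGraph

variable {V : Type*}

/-- The canonical (unique) path between two vertices of a tree. -/
noncomputable def tpath {G : SimpleGraph V} (hT : G.IsTree) (a b : V) : G.Walk a b :=
  (hT.existsUnique_path a b).choose

lemma tpath_isPath {G : SimpleGraph V} (hT : G.IsTree) (a b : V) :
    (tpath hT a b).IsPath := (hT.existsUnique_path a b).choose_spec.1

lemma eq_tpath {G : SimpleGraph V} (hT : G.IsTree) {a b : V} (q : G.Walk a b)
    (hq : q.IsPath) : q = tpath hT a b :=
  (hT.existsUnique_path a b).choose_spec.2 q hq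

lemma tpath_support_subset [DecidableEq V] {G : SimpleGraph V} (hT : G.IsTree) {a b : V}
    (w : G.Walk a b) : (tpath hT a b).support ⊆ w.support := by
  rw [← eq_tpath hT w.bypass w.bypass_isPath]
  exact w.support_bypass_subset

lemma tpath_length {G : SimpleGraph V} (hT : G.IsTree) (a b : V) :
    (tpath hT a b).length = G.dist a b := by
  obtain ⟨p, hp, hl⟩ := hT.isConnected.exists_path_of_dist a b
  rw [eq_tpath hT p hp] at hl
  exact hl

lemma dist_add_of_mem_tpath {G : SimpleGraph V} (hT : G.IsTree) {a b c : V}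
    (hc : c ∈ (tpath hT a b).support) : G.dist a b = G.dist a c + G.dist c b := by
  have h1 : G.dist a c ≤ ((tpath hT a b).takeUntil c hc).length := dist_le _
  have h2 : G.dist c b ≤ ((tpath hT a b).dropUntil c hc).length := dist_le _
  have h3 : ((tpath hT a b).takeUntil c hc).length + ((tpath hT a b).dropUntil c hc).length
      = G.dist a b := by
    have h := congrArg Walk.length ((tpath hT a b).take_spec hc)
    rw [Walk.length_append] at h
    rw [h, tpath_length]
  have h4 := hT.isConnected.dist_triangle (u := a) (v := c) (w := b)
  omega

lemma mem_tpath_step [DecidableEq V] {G : SimpleGraph V} (hT : G.IsTree) {r t x y : V}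
    (hadj : G.Adj y x) (hty : t ∈ (tpath hT r y).support)
    (hmin : G.dist r t ≤ G.dist r x) : t ∈ (tpath hT r x).support := by
  by_cases hx : x ∈ (tpath hT r y).support
  · have hd : G.dist r y = G.dist r x + G.dist x y := dist_add_of_mem_tpath hT hx
    have hxy1 : G.dist x y = 1 := dist_eq_one_iff_adj.mpr hadj.symm
    have hsub : (tpath hT r y).support ⊆ ((tpath hT r x).concat hadj.symm).support :=
      tpath_support_subset hT _
    have h := hsub hty
    rw [Walk.support_concat, List.mem_append, List.mem_singleton] at h
    rcases h with h | h
    · exact h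
    · subst h
      have hd2 : G.dist r t = G.dist r x + 1 := by omega
      omega
  · have hpath : ((tpath hT r y).concat hadj).IsPath := by
      rw [← Walk.isPath_reverse_iff, Walk.reverse_concat, Walk.cons_isPath_iff]
      refine ⟨(tpath_isPath hT r y).reverse, ?_⟩
      rw [Walk.support_reverse, List.mem_reverse]
      exact hx
    have heq : (tpath hT r y).concat hadj = tpath hT r x := eq_tpath hT _ hpath
    rw [← heq, Walk.support_concat, List.mem_append]
    exact Or.inl hty

lemma top_mem_tpath [DecidableEq V] {G : SimpleGraph V} (hT : G.IsTree) (r : V)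
    (S : Set V) (t : V) (ht : t ∈ S) (hmin : ∀ x ∈ S, G.dist r t ≤ G.dist r x) :
    ∀ (x : S) (_ : (G.induce S).Walk x ⟨t, ht⟩), t ∈ (tpath hT r x).support := by
  have key : ∀ (x z : S) (_ : (G.induce S).Walk x z),
      t ∈ (tpath hT r z).support → t ∈ (tpath hT r x).support := by
    intro x z w
    induction w with
    | nil => exact fun h => h
    | cons h p ih => exact fun hz => mem_tpath_step hT h.symm (ih hz) (hmin _ (Subtype.mem _))
  intro x w
  exact key x ⟨t, ht⟩ w (Walk.end_mem_support _)

lemma tpath_support_mem [DecidableEq V] {G : SimpleGraph V} (hT : G.IsTree) {S : Set V}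
    (hS : (G.induce S).Connected) {a b : V} (ha : a ∈ S) (hb : b ∈ S) :
    ∀ c ∈ (tpath hT a b).support, c ∈ S := by
  obtain ⟨w⟩ := hS.preconnected ⟨a, ha⟩ ⟨b, hb⟩
  intro c hc
  have h := tpath_support_subset hT (w.map (SimpleGraph.Embedding.induce S).toHom) hc
  rw [Walk.support_map] at h
  obtain ⟨d, _, rfl⟩ := List.mem_map.mp h
  exact d.2

lemma key_mem [DecidableEq V] {G : SimpleGraph V} (hT : G.IsTree) (r : V)
    {S T : Set V} (hS : (G.induce S).Connected) (hTc : (G.induce T).Connected)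
    {t s v : V} (ht : t ∈ T) (hs : s ∈ S)
    (hminT : ∀ x ∈ T, G.dist r t ≤ G.dist r x)
    (hminS : ∀ x ∈ S, G.dist r s ≤ G.dist r x)
    (hst : G.dist r s ≤ G.dist r t)
    (hvT : v ∈ T) (hvS : v ∈ S) : t ∈ S := by
  obtain ⟨wT⟩ := hTc.preconnected ⟨v, hvT⟩ ⟨t, ht⟩
  obtain ⟨wS⟩ := hS.preconnected ⟨v, hvS⟩ ⟨s, hs⟩
  have htQ : t ∈ (tpath hT r v).support := top_mem_tpath hT r T t ht hminT ⟨v, hvT⟩ wT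
  have hsQ : s ∈ (tpath hT r v).support := top_mem_tpath hT r S s hs hminS ⟨v, hvS⟩ wS
  have hmem : t ∈ ((tpath hT r v).takeUntil s hsQ).support ∨
      t ∈ ((tpath hT r v).dropUntil s hsQ).support := by
    rw [← Walk.mem_support_append_iff, (tpath hT r v).take_spec hsQ]
    exact htQ
  rcases hmem with h | h
  · have heq : (tpath hT r v).takeUntil s hsQ = tpath hT r s :=
      eq_tpath hT _ ((tpath_isPath hT r v).takeUntil hsQ)
    rw [heq] at h
    have hd := dist_add_of_mem_tpath hT h
    have hts : G.dist t s = 0 := by omega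
    have : t = s := (hT.isConnected.dist_eq_zero_iff).mp hts
    exact this ▸ hs
  · have heq : (tpath hT r v).dropUntil s hsQ = tpath hT s v :=
      eq_tpath hT _ ((tpath_isPath hT r v).dropUntil hsQ)
    rw [heq] at h
    exact tpath_support_mem hT hS hs hvS t h

lemma rf_mem_edge [DecidableEq V] {G : SimpleGraph V} (hT : G.IsTree) (r : V)
    {f e' : Finset V} (hfc : (G.induce (f : Set V)).Connected)
    (hec : (G.induce (e' : Set V)).Connected) (hene : e'.Nonempty)
    {rf : V} (hrf : rf ∈ f) (hrfmin : ∀ v ∈ f, G.dist r rf ≤ G.dist r v)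
    (htop : ∀ te ∈ e', (∀ v ∈ e', G.dist r te ≤ G.dist r v) → G.dist r te ≤ G.dist r rf)
    {v : V} (hvf : v ∈ f) (hve : v ∈ e') : rf ∈ e' := by
  obtain ⟨s, hs, hsmin⟩ := Finset.exists_min_image e' (G.dist r) hene
  have hst : G.dist r s ≤ G.dist r rf := htop s hs hsmin
  have h := key_mem hT r (S := (e' : Set V)) (T := (f : Set V)) hec hfc
      (by exact_mod_cast hrf) (by exact_mod_cast hs)
      (fun x hx => hrfmin x (by exact_mod_cast hx))
      (fun x hx => hsmin x (by exact_mod_cast hx))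
      hst (by exact_mod_cast hvf) (by exact_mod_cast hve)
  exact_mod_cast h

lemma part2 [DecidableEq V] (G : SimpleGraph V) (hT : G.IsTree) (r : V)
    (E : Finset (Finset V)) (hne : ∀ e ∈ E, e.Nonempty)
    (hsub : ∀ e ∈ E, (G.induce (e : Set V)).Connected)
    (pref : V → Finset V → Finset V → Prop)
    (hirr : ∀ v e, ¬ pref v e e)
    (htrans : ∀ v, Transitive (pref v)) :
    ∀ f ∈ E, ∀ rf ∈ f,
      (∀ v ∈ f, G.dist r rf ≤ G.dist r v) →
      (∀ e ∈ E, ∀ te ∈ e, (∀ v ∈ e, G.dist r te ≤ G.dist r v) →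
        G.dist r te ≤ G.dist r rf) →
      ∀ M : Finset (Finset V),
        IsStableMatching (E.filter (fun e => ¬ (e = f ∨ (rf ∈ e ∧ pref rf f e)))) pref M →
        ((Covers M rf → IsStableMatching E pref M) ∧
         (¬ Covers M rf → IsStableMatching E pref (insert f M))) := by
  intro f hf rf hrf hrfmin htop M hM
  obtain ⟨⟨hME, hcard⟩, hstab⟩ := hM
  have hE'sub : E.filter (fun e => ¬ (e = f ∨ (rf ∈ e ∧ pref rf f e))) ⊆ E :=
    Finset.filter_subset _ _
  constructor
  · intro hcov
    obtain ⟨em, hem, hrfem⟩ := hcov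
    have hemP : ¬ (em = f ∨ (rf ∈ em ∧ pref rf f em)) := (Finset.mem_filter.mp (hME hem)).2
    refine ⟨⟨fun e he => hE'sub (hME he), hcard⟩, ?_⟩
    intro e heE heM hblock
    by_cases heE' : e ∈ E.filter (fun e => ¬ (e = f ∨ (rf ∈ e ∧ pref rf f e)))
    · exact hstab e heE' heM hblock
    · have hP : e = f ∨ (rf ∈ e ∧ pref rf f e) := by
        by_contra h
        exact heE' (Finset.mem_filter.mpr ⟨heE, h⟩)
      rcases hP with rfl | ⟨hrfe, hpfe⟩
      · exact hemP (Or.inr ⟨hrfem, hblock rf hrf em hem hrfem⟩)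
      · exact hemP (Or.inr ⟨hrfem, htrans rf hpfe (hblock rf hrfe em hem hrfem)⟩)
  · intro hncov
    have hdisj : ∀ e' ∈ M, ∀ v ∈ e', v ∉ f := by
      intro e' he' v hv hvf
      have he'E : e' ∈ E := hE'sub (hME he')
      refine hncov ⟨e', he', ?_⟩
      exact rf_mem_edge hT r (hsub f hf) (hsub e' he'E) (hne e' he'E) hrf hrfmin
        (fun te hte htemin => htop e' he'E te hte htemin) hvf hv
    have hfM : f ∉ M := fun h => (hdisj f h rf hrf) hrf
    constructor
    · constructor
      · intro e he
        rcases Finset.mem_insert.mp he with rfl | h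
        · exact hf
        · exact hE'sub (hME h)
      · intro v
        rw [Finset.filter_insert]
        by_cases hvf : v ∈ f
        · rw [if_pos hvf]
          have hemp : M.filter (fun e => v ∈ e) = ∅ := by
            rw [Finset.filter_eq_empty_iff]
            intro e he hve
            exact hdisj e he v hve hvf
          rw [hemp]
          simp
        · rw [if_neg hvf]
          exact hcard v
    · intro e heE heM hblock
      by_cases heE' : e ∈ E.filter (fun e => ¬ (e = f ∨ (rf ∈ e ∧ pref rf f e)))
      · refine hstab e heE' (fun h => heM (Finset.mem_insert_of_mem h)) ?_
        intro v hv e'' he'' hve''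
        exact hblock v hv e'' (Finset.mem_insert_of_mem he'') hve''
      · have hP : e = f ∨ (rf ∈ e ∧ pref rf f e) := by
          by_contra h
          exact heE' (Finset.mem_filter.mpr ⟨heE, h⟩)
        rcases hP with rfl | ⟨hrfe, hpfe⟩
        · exact heM (Finset.mem_insert_self _ _)
        · exact hirr rf f
            (htrans rf hpfe (hblock rf hrfe f (Finset.mem_insert_self _ _) hrf))

lemma exists_stable [DecidableEq V] (G : SimpleGraph V) (hT : G.IsTree) (r : V)
    (pref : V → Finset V → Finset V → Prop)
    (hirr : ∀ v e, ¬ pref v e e)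
    (htrans : ∀ v, Transitive (pref v)) :
    ∀ E : Finset (Finset V), (∀ e ∈ E, e.Nonempty) →
      (∀ e ∈ E, (G.induce (e : Set V)).Connected) →
      ∃ M : Finset (Finset V), IsStableMatching E pref M := by
  intro E
  induction E using Finset.strongInduction with
  | _ E ih =>
    intro hne hsub
    rcases E.eq_empty_or_nonempty with rfl | hEne
    · refine ⟨∅, ⟨⟨Finset.Subset.refl _, by simp⟩, by simp⟩⟩
    · have htopex : ∀ e ∈ E, ∃ t ∈ e, ∀ v ∈ e, G.dist r t ≤ G.dist r v := fun e he =>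
        Finset.exists_min_image e (G.dist r) (hne e he)
      choose top htopmem htopmin using htopex
      obtain ⟨fp, _, hfmax⟩ := Finset.exists_max_image E.attach
        (fun e => G.dist r (top e.1 e.2)) (Finset.attach_nonempty_iff.mpr hEne)
      obtain ⟨f, hf⟩ := fp
      set rf := top f hf with hrfdef
      have hrfmem : rf ∈ f := htopmem f hf
      have hrfmin : ∀ v ∈ f, G.dist r rf ≤ G.dist r v := htopmin f hf
      have htop : ∀ e ∈ E, ∀ te ∈ e, (∀ v ∈ e, G.dist r te ≤ G.dist r v) →
          G.dist r te ≤ G.dist r rf := by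
        intro e he te hte htemin
        calc G.dist r te ≤ G.dist r (top e he) := htemin _ (htopmem e he)
          _ ≤ G.dist r rf := hfmax ⟨e, he⟩ (Finset.mem_attach _ _)
      have hss : E.filter (fun e => ¬ (e = f ∨ (rf ∈ e ∧ pref rf f e))) ⊂ E :=
        Finset.filter_ssubset.mpr ⟨f, hf, by simp⟩
      obtain ⟨M, hM⟩ := ih _ hss
        (fun e he => hne e (Finset.filter_subset _ _ he))
        (fun e he => hsub e (Finset.filter_subset _ _ he))
      have h := part2 G hT r E hne hsub pref hirr htrans f hf rf hrfmem hrfmin htop M hM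
      by_cases hcov : Covers M rf
      · exact ⟨M, h.1 hcov⟩
      · exact ⟨insert f M, h.2 hcov⟩

end SubtreeSM

/-- every subtree hypergraph with strict preferences admits a stable matching;
concretely, with `f` a hyperedge whose top vertex `r_f` is farthest from the root and
`X_f` the set of hyperedges containing `r_f` ranked strictly below `f` by `r_f`,
a stable matching `M` of the hypergraph with `X_f ∪ {f}` deleted yields a stable matching
of the original hypergraph: `M` itself if `M` covers `r_f`, and `M ∪ {f}` otherwise. -/
theorem subtree_stable_matching {V : Type*} [Fintype V] [DecidableEq V]
    (G : SimpleGraph V) (hT : G.IsTree) (r : V)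
    (E : Finset (Finset V)) (hne : ∀ e ∈ E, e.Nonempty)
    (hsub : ∀ e ∈ E, (G.induce (e : Set V)).Connected)
    (pref : V → Finset V → Finset V → Prop)
    (hirr : ∀ v e, ¬ pref v e e)
    (htrans : ∀ v, Transitive (pref v))
    (htotal : ∀ v, ∀ e1 ∈ E, ∀ e2 ∈ E, v ∈ e1 → v ∈ e2 → e1 ≠ e2 →
      pref v e1 e2 ∨ pref v e2 e1) :
    (∃ M : Finset (Finset V), IsStableMatching E pref M) ∧
    (∀ f ∈ E, ∀ rf ∈ f,
      (∀ v ∈ f, G.dist r rf ≤ G.dist r v) →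
      (∀ e ∈ E, ∀ te ∈ e, (∀ v ∈ e, G.dist r te ≤ G.dist r v) →
        G.dist r te ≤ G.dist r rf) →
      ∀ M : Finset (Finset V),
        IsStableMatching (E.filter (fun e => ¬ (e = f ∨ (rf ∈ e ∧ pref rf f e)))) pref M →
        ((Covers M rf → IsStableMatching E pref M) ∧
         (¬ Covers M rf → IsStableMatching E pref (insert f M)))) := by
  exact ⟨SubtreeSM.exists_stable G hT r pref hirr htrans E hne hsub,
    SubtreeSM.part2 G hT r E hne hsub pref hirr htrans⟩
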